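/- (Deterministic core of Theorem 4.2: minimizing the supervised contrastive loss does not imply class collapse.) In the structured contrastive dataset with p ≥ 3, for every c > 0 there exists a global minimizer W* ∈ ℝ^{p×D} of L_SCL such that ‖W* v_2‖ ≥ c. In particular, not every global minimizer of the supervised contrastive loss annihilates the subclass feature v_2. -/

import Mathlib

open Matrix

lemma aux_trace_sq_nonneg {n : Type*} [Fintype n] (T : Matrix n n ℝ) (hT : Tᵀ = T) :
    0 ≤ Matrix.trace (T * T) := by
  have h : Matrix.trace (T * T) = ∑ i, ∑ j, (T i j)^2 := by
    simp only [Matrix.trace, Matrix.diag, Matrix.mul_apply]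
    refine Finset.sum_congr rfl fun i _ => Finset.sum_congr rfl fun j _ => ?_
    have : T j i = T i j := by nth_rewrite 1 [← hT]; rw [Matrix.transpose_apply]
    rw [this]; ring
  rw [h]
  exact Finset.sum_nonneg fun i _ => Finset.sum_nonneg fun j _ => sq_nonneg _

open scoped MatrixOrder in
lemma aux_trace_SMSM_nonneg {n : Type*} [Fintype n] [DecidableEq n]
    (M S : Matrix n n ℝ) (hM : M.PosSemidef) (hS : Sᵀ = S) :
    0 ≤ Matrix.trace (S * M * S * M) := by
  set R := CFC.sqrt M with hRdef
  have hR2 : R * R = M := CFC.sqrt_mul_sqrt_self M hM.nonneg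
  have hRsym : Rᵀ = R := by
    have := (CFC.sqrt_nonneg M).posSemidef.1
    rwa [Matrix.IsHermitian, conjTranspose_eq_transpose_of_trivial] at this
  have key : Matrix.trace (S * M * S * M) = Matrix.trace ((R * S * R) * (R * S * R)) := by
    rw [← hR2]
    rw [show S * (R * R) * S * (R * R) = (S * R * R * S * R) * R by noncomm_ring]
    rw [Matrix.trace_mul_comm]
    congr 1
    noncomm_ring
  rw [key]
  refine aux_trace_sq_nonneg _ ?_
  rw [Matrix.transpose_mul, Matrix.transpose_mul, hRsym, hS]
  noncomm_ring

lemma aux_mul_vecMulVec_mul {n : Type*} [Fintype n] (M : Matrix n n ℝ) (hM : Mᵀ = M)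
    (a b : n → ℝ) : M * Matrix.vecMulVec a b * M = Matrix.vecMulVec (M *ᵥ a) (M *ᵥ b) := by
  ext s t
  simp only [Matrix.mul_apply, Matrix.vecMulVec_apply, Matrix.mulVec, dotProduct]
  simp only [Finset.sum_mul, Finset.mul_sum]
  refine Finset.sum_congr rfl fun i _ => Finset.sum_congr rfl fun j _ => ?_
  have : M i t = M t i := by nth_rewrite 1 [← hM]; rw [Matrix.transpose_apply]
  rw [this]; ring

lemma aux_sum_vecMulVec_mulVec {n ι : Type*} [Fintype n] [Fintype ι]
    (f : ι → n → ℝ) (z : n → ℝ) :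
    (∑ i, Matrix.vecMulVec (f i) (f i)) *ᵥ z = ∑ i, (f i ⬝ᵥ z) • f i := by
  ext t
  simp only [Matrix.mulVec, dotProduct, Matrix.sum_apply, Matrix.vecMulVec_apply,
    Finset.sum_apply, Pi.smul_apply, smul_eq_mul]
  simp only [Finset.sum_mul, Finset.mul_sum]
  rw [Finset.sum_comm]
  refine Finset.sum_congr rfl fun i _ => Finset.sum_congr rfl fun j _ => ?_
  ring

lemma aux_dotProduct_sum {n ι : Type*} [Fintype n] [Fintype ι]
    (v : n → ℝ) (f : ι → n → ℝ) : v ⬝ᵥ (∑ i, f i) = ∑ i, v ⬝ᵥ f i := by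
  simp only [dotProduct, Finset.sum_apply, Finset.mul_sum]
  exact Finset.sum_comm

lemma aux_sum_dotProduct {n ι : Type*} [Fintype n] [Fintype ι]
    (v : n → ℝ) (f : ι → n → ℝ) : (∑ i, f i) ⬝ᵥ v = ∑ i, f i ⬝ᵥ v := by
  simp only [dotProduct, Finset.sum_apply, Finset.sum_mul]
  exact Finset.sum_comm

/-- The contrastive trace loss `Tr(-2 WᵀW P + WᵀW M WᵀW M)`. -/
noncomputable def CLTraceLoss {p D : ℕ} (P M : Matrix (Fin D) (Fin D) ℝ)
    (W : Matrix (Fin p) (Fin D) ℝ) : ℝ :=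
  Matrix.trace ((-2 : ℝ) • (Wᵀ * W * P) + Wᵀ * W * M * (Wᵀ * W) * M)

theorem stmt_0
    (m K n D : ℕ)
    (hm : 1 ≤ m) (hK : 3 ≤ K) (hn : 1 ≤ n) (hdiv : 8 * (K - 2) ∣ n)
    (hD : K + 1 + m * n ≤ D)
    (φ : ℕ → ℝ) (hφ : ∀ j, 1 ≤ j → j ≤ K → 0 < φ j)
    (μ σξ : ℝ) (hσ : 0 < σξ)
    (v : ℕ → Fin D → ℝ)
    (hortho : ∀ i j, i ≤ K + m * n → j ≤ K + m * n →
      (∑ t, v i t * v j t) = if i = j then (1 : ℝ) else 0)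
    (y ysub ρ : Fin (m * n) → ℝ) (κ : Fin (m * n) → ℕ)
    (hy : ∀ i, y i = 1 ∨ y i = -1)
    (hysub : ∀ i, ysub i = 1 ∨ ysub i = -1)
    (hρ : ∀ i, ρ i = 1 ∨ ρ i = -1)
    (hκ : ∀ i, 3 ≤ κ i ∧ κ i ≤ K)
    (hblock : ∀ i j : Fin (m * n), i.1 / m = j.1 / m →
      y i = y j ∧ ysub i = ysub j ∧ κ i = κ j ∧ ρ i = ρ j)
    (hbal : ∀ (a b r : ℝ) (c : ℕ), (a = 1 ∨ a = -1) → (b = 1 ∨ b = -1) →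
      (r = 1 ∨ r = -1) → 3 ≤ c → c ≤ K →
      Set.ncard {i : Fin (m * n) | y i = a ∧ ysub i = b ∧ κ i = c ∧ ρ i = r}
        = m * n / (8 * (K - 2)))
    (x : Fin (m * n) → Fin D → ℝ)
    (hx : ∀ i, x i = fun t => v 0 t + y i * φ 1 * v 1 t + (ysub i * φ 2 + μ) * v 2 t
      + ρ i * φ (κ i) * v (κ i) t + σξ * v (K + 1 + i.1) t)
    (M Mp : Matrix (Fin D) (Fin D) ℝ)
    (hM : M = ((m * n : ℝ))⁻¹ • ∑ i, Matrix.vecMulVec (x i) (x i))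
    (xbar : ℝ → Fin D → ℝ)
    (hxbar : ∀ ε, xbar ε = (2 / (m * n : ℝ)) •
      ∑ i, Set.indicator {j : Fin (m * n) | y j = ε} x i)
    (hMp : Mp = (2 : ℝ)⁻¹ • (Matrix.vecMulVec (xbar 1) (xbar 1)
      + Matrix.vecMulVec (xbar (-1)) (xbar (-1))))
    (p : ℕ) (hp : 3 ≤ p) :
    ∀ c : ℝ, 0 < c → ∃ Wstar : Matrix (Fin p) (Fin D) ℝ,
      (∀ W : Matrix (Fin p) (Fin D) ℝ, CLTraceLoss Mp M Wstar ≤ CLTraceLoss Mp M W) ∧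
      c ≤ Real.sqrt (∑ j, (Wstar.mulVec (v 2) j) ^ 2) := by
  intro c hc
  have hφ1 : (0:ℝ) < φ 1 := hφ 1 le_rfl (by omega)
  have hφ1' : φ 1 ≠ 0 := ne_of_gt hφ1
  have hσ' : σξ ≠ 0 := ne_of_gt hσ
  have hNpos : (0:ℝ) < (m : ℝ) * (n : ℝ) := by
    have h1 : (0:ℝ) < (m:ℝ) := by exact_mod_cast hm
    have h2 : (0:ℝ) < (n:ℝ) := by exact_mod_cast hn
    positivity
  -- dot products of the orthonormal family
  have hvd : ∀ a b : ℕ, a ≤ K + m * n → b ≤ K + m * n →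
      (v a ⬝ᵥ v b) = if a = b then (1:ℝ) else 0 := by
    intro a b ha hb
    simpa [dotProduct] using hortho a b ha hb
  -- dot products of data with basis vectors
  have hxv : ∀ (i : Fin (m * n)) (j : ℕ), j ≤ K + m * n →
      (x i ⬝ᵥ v j) = (if 0 = j then (1:ℝ) else 0)
        + y i * φ 1 * (if 1 = j then 1 else 0)
        + (ysub i * φ 2 + μ) * (if 2 = j then 1 else 0)
        + ρ i * φ (κ i) * (if κ i = j then 1 else 0)
        + σξ * (if K + 1 + i.1 = j then 1 else 0) := by
    intro i j hj
    have hi := i.isLt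
    have hk2 := (hκ i).2
    rw [hx i]
    simp only [dotProduct]
    simp only [add_mul, Finset.sum_add_distrib, mul_assoc, ← Finset.mul_sum]
    rw [hortho 0 j (by omega) hj, hortho 1 j (by omega) hj, hortho 2 j (by omega) hj,
      hortho (κ i) j (by omega) hj, hortho (K + 1 + i.1) j (by omega) hj]
  have hκ3 : ∀ i, 3 ≤ κ i := fun i => (hκ i).1
  have hκK : ∀ i, κ i ≤ K := fun i => (hκ i).2
  have hx0 : ∀ i, x i ⬝ᵥ v 0 = 1 := by
    intro i
    rw [hxv i 0 (by omega)]
    have h1 := hκ3 i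
    rw [if_pos rfl, if_neg (by omega), if_neg (by omega), if_neg (by omega), if_neg (by omega)]
    ring
  have hx1 : ∀ i, x i ⬝ᵥ v 1 = y i * φ 1 := by
    intro i
    rw [hxv i 1 (by omega)]
    have h1 := hκ3 i
    rw [if_neg (by omega), if_pos rfl, if_neg (by omega), if_neg (by omega), if_neg (by omega)]
    ring
  have hx2 : ∀ i, x i ⬝ᵥ v 2 = ysub i * φ 2 + μ := by
    intro i
    rw [hxv i 2 (by omega)]
    have h1 := hκ3 i
    rw [if_neg (by omega), if_neg (by omega), if_pos rfl, if_neg (by omega), if_neg (by omega)]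
    ring
  have hxe : ∀ i j : Fin (m * n), x i ⬝ᵥ v (K + 1 + j.1) = if i = j then σξ else 0 := by
    intro i j
    have hj := j.isLt
    have h1 := hκ3 i
    have h2 := hκK i
    rw [hxv i (K + 1 + j.1) (by omega)]
    rw [if_neg (by omega), if_neg (by omega), if_neg (by omega), if_neg (by omega)]
    by_cases hij : i = j
    · subst hij
      rw [if_pos rfl, if_pos rfl]
      ring
    · have : i.1 ≠ j.1 := fun h => hij (Fin.ext h)
      rw [if_neg (by omega), if_neg hij]
      ring
  -- the special vectors
  set z1 : Fin D → ℝ := v 0 + (φ 1)⁻¹ • v 1 with hz1def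
  set z2 : Fin D → ℝ := v 0 + (-(φ 1)⁻¹) • v 1 with hz2def
  set u : Fin D → ℝ := v 2 - ∑ j : Fin (m * n), ((ysub j * φ 2 + μ) / σξ) • v (K + 1 + j.1)
    with hudef
  have hxz1 : ∀ i, x i ⬝ᵥ z1 = 1 + y i := by
    intro i
    rw [hz1def, dotProduct_add, dotProduct_smul, hx0, hx1, smul_eq_mul]
    field_simp
  have hxz2 : ∀ i, x i ⬝ᵥ z2 = 1 - y i := by
    intro i
    rw [hz2def, dotProduct_add, dotProduct_smul, hx0, hx1, smul_eq_mul]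
    field_simp
    ring
  have hxu : ∀ i, x i ⬝ᵥ u = 0 := by
    intro i
    rw [hudef, dotProduct_sub, aux_dotProduct_sum, hx2]
    have : ∀ j : Fin (m * n), x i ⬝ᵥ ((ysub j * φ 2 + μ) / σξ) • v (K + 1 + j.1)
        = if i = j then ysub i * φ 2 + μ else 0 := by
      intro j
      rw [dotProduct_smul, hxe i j]
      by_cases hij : i = j
      · subst hij; rw [if_pos rfl, if_pos rfl, smul_eq_mul]; field_simp
      · rw [if_neg hij, if_neg hij]; simp
    rw [Finset.sum_congr rfl fun j _ => this j]
    simp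
  -- action of M
  have hMv : ∀ w : Fin D → ℝ, M *ᵥ w = ((m:ℝ) * (n:ℝ))⁻¹ • ∑ i, (x i ⬝ᵥ w) • x i := by
    intro w
    rw [hM, Matrix.smul_mulVec, aux_sum_vecMulVec_mulVec]
  have hMu : M *ᵥ u = 0 := by
    rw [hMv]
    simp [hxu]
  have indic : ∀ (ε : ℝ) (i : Fin (m * n)),
      Set.indicator {j : Fin (m * n) | y j = ε} x i = if y i = ε then x i else 0 := by
    intro ε i
    simp [Set.indicator_apply, Set.mem_setOf_eq]
  have hMz1 : M *ᵥ z1 = xbar 1 := by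
    rw [hMv, hxbar 1]
    have h : ∀ i : Fin (m * n), (x i ⬝ᵥ z1) • x i
        = (2:ℝ) • Set.indicator {j : Fin (m * n) | y j = (1:ℝ)} x i := by
      intro i
      rw [hxz1 i, indic]
      rcases hy i with h | h <;> rw [h] <;> norm_num
    rw [Finset.sum_congr rfl fun i _ => h i, ← Finset.smul_sum, smul_smul]
    congr 1
    field_simp
  have hMz2 : M *ᵥ z2 = xbar (-1) := by
    rw [hMv, hxbar (-1)]
    have h : ∀ i : Fin (m * n), (x i ⬝ᵥ z2) • x i
        = (2:ℝ) • Set.indicator {j : Fin (m * n) | y j = (-1:ℝ)} x i := by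
      intro i
      rw [hxz2 i, indic]
      rcases hy i with h | h <;> rw [h] <;> norm_num
    rw [Finset.sum_congr rfl fun i _ => h i, ← Finset.smul_sum, smul_smul]
    congr 1
    field_simp
  -- symmetry and positive semidefiniteness of M
  have hvmvT : ∀ a : Fin D → ℝ, (Matrix.vecMulVec a a)ᵀ = Matrix.vecMulVec a a := by
    intro a
    ext s t
    simp [Matrix.vecMulVec_apply, mul_comm]
  have hMsym : Mᵀ = M := by
    rw [hM, Matrix.transpose_smul, Matrix.transpose_sum]
    congr 1
    exact Finset.sum_congr rfl fun i _ => hvmvT (x i)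
  have hMpsd : M.PosSemidef := by
    refine Matrix.PosSemidef.of_dotProduct_mulVec_nonneg ?_ ?_
    · rw [Matrix.IsHermitian, conjTranspose_eq_transpose_of_trivial]
      exact hMsym
    · intro w
      have hsw : star w = w := by
        funext t
        simp
      rw [hsw, hMv w, dotProduct_smul, aux_dotProduct_sum]
      have h : ∀ i : Fin (m * n), w ⬝ᵥ (x i ⬝ᵥ w) • x i = (x i ⬝ᵥ w)^2 := by
        intro i
        rw [dotProduct_smul, smul_eq_mul, dotProduct_comm]
        ring
      rw [Finset.sum_congr rfl fun i _ => h i, smul_eq_mul]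
      have : (0:ℝ) ≤ ∑ i, (x i ⬝ᵥ w)^2 :=
        Finset.sum_nonneg fun i _ => sq_nonneg _
      positivity
  -- the optimal Gram matrix
  set B : Matrix (Fin D) (Fin D) ℝ := (2:ℝ)⁻¹ • Matrix.vecMulVec z1 z1
    + (2:ℝ)⁻¹ • Matrix.vecMulVec z2 z2 + (c^2) • Matrix.vecMulVec u u with hBdef
  have hBsym : Bᵀ = B := by
    rw [hBdef]
    simp only [Matrix.transpose_add, Matrix.transpose_smul, hvmvT]
  have hMBM : M * B * M = Mp := by
    rw [hBdef, hMp]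
    simp only [Matrix.mul_add, Matrix.add_mul, Matrix.mul_smul, Matrix.smul_mul]
    rw [aux_mul_vecMulVec_mul M hMsym, aux_mul_vecMulVec_mul M hMsym,
      aux_mul_vecMulVec_mul M hMsym, hMz1, hMz2, hMu]
    have : Matrix.vecMulVec (0 : Fin D → ℝ) (0 : Fin D → ℝ) = 0 := by
      ext s t
      simp [Matrix.vecMulVec_apply]
    rw [this, smul_zero, add_zero, smul_add]
  -- loss decomposition
  have hloss : ∀ W : Matrix (Fin p) (Fin D) ℝ, CLTraceLoss Mp M W
      = Matrix.trace ((Wᵀ * W - B) * M * (Wᵀ * W - B) * M)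
        - Matrix.trace (B * M * B * M) := by
    intro W
    set A := Wᵀ * W with hAdef
    have h1 : Matrix.trace ((A - B) * M * (A - B) * M)
        = Matrix.trace (A * M * A * M) - 2 * Matrix.trace (A * (M * B * M))
          + Matrix.trace (B * M * B * M) := by
      have e : (A - B) * M * (A - B) * M
          = (A * M * A * M - A * (M * B * M)) - ((B * M) * (A * M) - B * M * B * M) := by
        noncomm_ring
      rw [e, Matrix.trace_sub, Matrix.trace_sub, Matrix.trace_sub,
        Matrix.trace_mul_comm (B * M) (A * M)]
      have e2 : (A * M) * (B * M) = A * (M * B * M) := by noncomm_ring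
      rw [e2]
      ring
    show Matrix.trace ((-2 : ℝ) • (A * Mp) + A * M * A * M) = _
    rw [← hMBM, Matrix.trace_add, Matrix.trace_smul, h1, smul_eq_mul]
    ring
  -- the minimizer
  set s : ℝ := Real.sqrt 2⁻¹ with hsdef
  have hs2 : s^2 = 2⁻¹ := Real.sq_sqrt (by norm_num)
  set Wstar : Matrix (Fin p) (Fin D) ℝ := Matrix.of fun r t =>
    if r.1 = 0 then s * z1 t else if r.1 = 1 then s * z2 t else if r.1 = 2 then c * u t else 0
    with hWdef
  have happ : ∀ (r : Fin p) (t : Fin D), Wstar r t = if r.1 = 0 then s * z1 t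
      else if r.1 = 1 then s * z2 t else if r.1 = 2 then c * u t else 0 := by
    intro r t
    rw [hWdef]
    rfl
  have hcol : ∀ (k : ℕ), k < p → ∀ X : ℝ, ∑ r : Fin p, (if r.1 = k then X else 0) = X := by
    intro k hk X
    have h1 : ∀ r : Fin p, (if r.1 = k then X else 0)
        = (if r = (⟨k, hk⟩ : Fin p) then X else 0) := by
      intro r
      by_cases h : r = (⟨k, hk⟩ : Fin p)
      · rw [if_pos h, if_pos]
        rw [h]
      · rw [if_neg h, if_neg]
        intro hh
        exact h (Fin.ext hh)
    rw [Finset.sum_congr rfl fun r _ => h1 r]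
    simp
  have hWW : Wstarᵀ * Wstar = B := by
    ext a b
    rw [Matrix.mul_apply]
    simp only [Matrix.transpose_apply]
    have hterm : ∀ r : Fin p, Wstar r a * Wstar r b
        = (if r.1 = 0 then s^2 * (z1 a * z1 b) else 0)
          + (if r.1 = 1 then s^2 * (z2 a * z2 b) else 0)
          + (if r.1 = 2 then c^2 * (u a * u b) else 0) := by
      intro r
      rw [happ r a, happ r b]
      by_cases h0 : r.1 = 0
      · rw [if_pos h0, if_pos h0, if_pos h0, if_neg (by omega), if_neg (by omega)]
        ring
      · rw [if_neg h0, if_neg h0, if_neg h0]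
        by_cases h1 : r.1 = 1
        · rw [if_pos h1, if_pos h1, if_pos h1, if_neg (by omega)]
          ring
        · rw [if_neg h1, if_neg h1, if_neg h1]
          by_cases h2 : r.1 = 2
          · rw [if_pos h2, if_pos h2, if_pos h2]
            ring
          · rw [if_neg h2, if_neg h2, if_neg h2]
            ring
    rw [Finset.sum_congr rfl fun r _ => hterm r]
    rw [Finset.sum_add_distrib, Finset.sum_add_distrib,
      hcol 0 (by omega) _, hcol 1 (by omega) _, hcol 2 (by omega) _]
    rw [hBdef]
    simp only [Matrix.add_apply, Matrix.smul_apply, Matrix.vecMulVec_apply, smul_eq_mul, hs2]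
  refine ⟨Wstar, ?_, ?_⟩
  · intro W
    rw [hloss W, hloss Wstar, hWW]
    have h0 : (B - B) * M * (B - B) * M = 0 := by
      rw [sub_self]
      simp
    rw [h0, Matrix.trace_zero]
    have hSsym : (Wᵀ * W - B)ᵀ = Wᵀ * W - B := by
      rw [Matrix.transpose_sub, Matrix.transpose_mul, Matrix.transpose_transpose, hBsym]
    have := aux_trace_SMSM_nonneg M (Wᵀ * W - B) hMpsd hSsym
    linarith
  · -- norm of Wstar v 2
    have hz1v2 : z1 ⬝ᵥ v 2 = 0 := by
      rw [hz1def, add_dotProduct, smul_dotProduct, hvd 0 2 (by omega) (by omega),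
        hvd 1 2 (by omega) (by omega)]
      norm_num
    have hz2v2 : z2 ⬝ᵥ v 2 = 0 := by
      rw [hz2def, add_dotProduct, smul_dotProduct, hvd 0 2 (by omega) (by omega),
        hvd 1 2 (by omega) (by omega)]
      norm_num
    have huv2 : u ⬝ᵥ v 2 = 1 := by
      rw [hudef, sub_dotProduct, aux_sum_dotProduct, hvd 2 2 (by omega) (by omega)]
      have h : ∀ j : Fin (m * n),
          (((ysub j * φ 2 + μ) / σξ) • v (K + 1 + j.1)) ⬝ᵥ v 2 = 0 := by
        intro j
        have hj := j.isLt
        rw [smul_dotProduct, hvd (K + 1 + j.1) 2 (by omega) (by omega), if_neg (by omega)]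
        simp
      rw [Finset.sum_congr rfl fun j _ => h j]
      simp
    have hmv : ∀ j : Fin p, Wstar.mulVec (v 2) j = if j.1 = 2 then c else 0 := by
      intro j
      have hrow : Wstar.mulVec (v 2) j = ∑ t, Wstar j t * v 2 t := rfl
      rw [hrow]
      by_cases h0 : j.1 = 0
      · rw [if_neg (by omega)]
        rw [Finset.sum_congr rfl fun t _ => by rw [happ j t, if_pos h0]]
        have : ∑ t, s * z1 t * v 2 t = s * (z1 ⬝ᵥ v 2) := by
          rw [dotProduct, Finset.mul_sum]
          exact Finset.sum_congr rfl fun t _ => by ring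
        rw [this, hz1v2, mul_zero]
      · by_cases h1 : j.1 = 1
        · rw [if_neg (by omega)]
          rw [Finset.sum_congr rfl fun t _ => by rw [happ j t, if_neg h0, if_pos h1]]
          have : ∑ t, s * z2 t * v 2 t = s * (z2 ⬝ᵥ v 2) := by
            rw [dotProduct, Finset.mul_sum]
            exact Finset.sum_congr rfl fun t _ => by ring
          rw [this, hz2v2, mul_zero]
        · by_cases h2 : j.1 = 2
          · rw [if_pos h2]
            rw [Finset.sum_congr rfl fun t _ => by rw [happ j t, if_neg h0, if_neg h1, if_pos h2]]
            have : ∑ t, c * u t * v 2 t = c * (u ⬝ᵥ v 2) := by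
              rw [dotProduct, Finset.mul_sum]
              exact Finset.sum_congr rfl fun t _ => by ring
            rw [this, huv2, mul_one]
          · rw [if_neg h2]
            rw [Finset.sum_congr rfl fun t _ => by
              rw [happ j t, if_neg h0, if_neg h1, if_neg h2]]
            simp
    have hsum : ∑ j, (Wstar.mulVec (v 2) j)^2 = c^2 := by
      have h : ∀ j : Fin p, (Wstar.mulVec (v 2) j)^2 = if j.1 = 2 then c^2 else 0 := by
        intro j
        rw [hmv j]
        by_cases h2 : j.1 = 2
        · rw [if_pos h2, if_pos h2]
        · rw [if_neg h2, if_neg h2]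
          ring
      rw [Finset.sum_congr rfl fun j _ => h j, hcol 2 (by omega) _]
    rw [hsum, Real.sqrt_sq hc.le]
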